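/- Let U be uniform on (0,1), γ ∈ (0,1), μ₁,…,μₙ probability measures on ℝ, X₁,…,Xₙ random variables with Xᵢ ~ μᵢ satisfying: (iii) X₁,…,Xₙ are independent under the conditional probability P^γ(·) = P(·∩{U≤γ})/γ on {U≤γ}; (iv) P({Xᵢ > F⁻¹_{μᵢ}(γ)} ∩ {U≤γ}) = 0 and Xᵢ1_{U>γ} = F⁻¹_{μᵢ}(U)1_{U>γ}. Let f : ℝⁿ → ℝ be nondecreasing and left-continuous, q(α) = f(F⁻¹_{μ₁}(α),…,F⁻¹_{μₙ}(α)). Then for every α ∈ [γ,1), VaR^α_P(f(X)) = q(α). -/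

import Mathlib

open MeasureTheory

/-- Left-continuous quantile function `F⁻¹_μ(u) = inf {a : F_μ(a) ≥ u}`. -/
noncomputable def qf (μ : Measure ℝ) (u : ℝ) : ℝ :=
  sInf {a : ℝ | u ≤ (μ (Set.Iic a)).toReal}

/-- Value at risk at level `α`: `VaR^α(Z) = inf {a : P(Z > a) ≤ 1 − α}`. -/
noncomputable def VaR {Ω : Type*} [MeasurableSpace Ω] (P : Measure Ω)
    (Z : Ω → ℝ) (α : ℝ) : ℝ :=
  sInf {a : ℝ | (P {ω | a < Z ω}).toReal ≤ 1 - α}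

section Aux

open ProbabilityTheory Set Filter

variable {μ : Measure ℝ} [IsProbabilityMeasure μ] {u v c y : ℝ}

lemma qf_set_eq (μ : Measure ℝ) [IsProbabilityMeasure μ] (u : ℝ) :
    {a : ℝ | u ≤ (μ (Set.Iic a)).toReal} = {a : ℝ | u ≤ cdf μ a} := by
  ext a; simp [cdf_eq_real, measureReal_def]

lemma qf_bddBelow (hu : 0 < u) : BddBelow {a : ℝ | u ≤ cdf μ a} := by
  obtain ⟨a₀, ha₀⟩ :=
    ((tendsto_cdf_atBot (μ := μ)).eventually (eventually_lt_nhds hu)).exists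
  refine ⟨a₀, fun a ha => ?_⟩
  by_contra h
  push_neg at h
  exact absurd ha (not_le.mpr (lt_of_le_of_lt (monotone_cdf _ h.le) ha₀))

lemma qf_nonempty (hu : u < 1) : {a : ℝ | u ≤ cdf μ a}.Nonempty := by
  obtain ⟨a, ha⟩ :=
    ((tendsto_cdf_atTop (μ := μ)).eventually (eventually_gt_nhds hu)).exists
  exact ⟨a, ha.le⟩

lemma qf_le_of_le_cdf (hu : 0 < u) (h : u ≤ cdf μ c) : qf μ u ≤ c := by
  rw [qf, qf_set_eq]
  exact csInf_le (qf_bddBelow hu) h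

lemma le_cdf_of_qf_le (hu0 : 0 < u) (hu1 : u < 1) (h : qf μ u ≤ c) : u ≤ cdf μ c := by
  rw [qf, qf_set_eq] at h
  have key : ∀ k : ℕ, u ≤ cdf μ (c + 1 / (k + 1)) := by
    intro k
    have hε : (0 : ℝ) < 1 / (k + 1) := by positivity
    obtain ⟨b, hb, hbe⟩ :=
      (Real.sInf_le_iff (qf_bddBelow hu0) (qf_nonempty hu1)).mp h _ hε
    exact le_trans hb (monotone_cdf _ hbe.le)
  have hseq : Tendsto (fun k : ℕ => cdf μ (c + 1 / (k + 1))) atTop (nhds (cdf μ c)) := by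
    have h1 : Tendsto (fun k : ℕ => c + 1 / ((k : ℝ) + 1)) atTop (nhdsWithin c (Ici c)) := by
      apply tendsto_nhdsWithin_of_tendsto_nhds_of_eventually_within
      · simpa using (tendsto_const_nhds (x := c)).add tendsto_one_div_add_atTop_nhds_zero_nat
      · filter_upwards with k
        have : (0 : ℝ) < 1 / (k + 1) := by positivity
        simp only [Set.mem_Ici]
        linarith
    exact ((cdf μ).right_continuous c).tendsto.comp h1
  exact ge_of_tendsto hseq (Filter.Eventually.of_forall key)

lemma cdf_lt_of_lt_qf (hu0 : 0 < u) (h : y < qf μ u) : cdf μ y < u := by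
  by_contra hc
  push_neg at hc
  exact absurd (qf_le_of_le_cdf hu0 hc) (not_le.mpr h)

lemma lt_qf_of_cdf_lt (hu0 : 0 < u) (hu1 : u < 1) (h : cdf μ y < u) : y < qf μ u := by
  by_contra hc
  push_neg at hc
  exact absurd (le_cdf_of_qf_le hu0 hu1 hc) (not_le.mpr h)

lemma qf_mono' (hu0 : 0 < u) (huv : u ≤ v) (hv1 : v < 1) : qf μ u ≤ qf μ v := by
  rw [qf, qf, qf_set_eq, qf_set_eq]
  exact csInf_le_csInf (qf_bddBelow hu0) (qf_nonempty hv1) (fun a ha => le_trans huv ha)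

end Aux

open ProbabilityTheory Filter

/-- If `X₁,…,Xₙ` with `Xᵢ ~ μᵢ` are conditionally independent on `{U ≤ γ}` (under the
normalized restricted measure), satisfy `P({Xᵢ > F⁻¹_{μᵢ}(γ)} ∩ {U ≤ γ}) = 0`, and agree
with the comonotone vector `F⁻¹_{μᵢ}(U)` on `{U > γ}`, then for every nondecreasing
left-continuous `f` and every `α ∈ [γ,1)`, `VaR^α_P(f(X)) = q(α)`. -/
theorem VaR_upper_comonotone {Ω : Type*} [MeasurableSpace Ω] (P : Measure Ω)
    [IsProbabilityMeasure P]
    (n : ℕ) (U : Ω → ℝ) (hU : Measurable U)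
    (hUunif : P.map U = volume.restrict (Set.Ioo (0 : ℝ) 1))
    (γ : ℝ) (hγ : γ ∈ Set.Ioo (0 : ℝ) 1)
    (μ : Fin n → ProbabilityMeasure ℝ) (X : Fin n → Ω → ℝ)
    (hXm : ∀ i, Measurable (X i))
    (hXd : ∀ i, P.map (X i) = (μ i).toMeasure)
    (hindep : ProbabilityTheory.iIndepFun X
      ((ENNReal.ofReal γ)⁻¹ • P.restrict {ω | U ω ≤ γ}))
    (h0 : ∀ i, P ({ω | qf (μ i).toMeasure γ < X i ω} ∩ {ω | U ω ≤ γ}) = 0)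
    (hagree : ∀ i ω, γ < U ω → X i ω = qf (μ i).toMeasure (U ω))
    (f : (Fin n → ℝ) → ℝ) (hf : Monotone f)
    (hlc : ∀ x : Fin n → ℝ,
      Filter.Tendsto f (nhdsWithin x {y | ∀ i, y i < x i}) (nhds (f x))) :
    ∀ α ∈ Set.Ico γ 1,
      VaR P (fun ω => f (fun i => X i ω)) α = f (fun i => qf (μ i).toMeasure α) := by
  obtain ⟨hγ0, hγ1⟩ := hγ
  rintro α ⟨hγα, hα1⟩
  have hα0 : 0 < α := lt_of_lt_of_le hγ0 hγα
  set x : Fin n → ℝ := fun i => qf (μ i).toMeasure α with hxdef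
  -- preimage measure computations
  have hPU : ∀ s : Set ℝ, MeasurableSet s → P (U ⁻¹' s) = volume (s ∩ Set.Ioo 0 1) := by
    intro s hs
    rw [← Measure.map_apply hU hs, hUunif, Measure.restrict_apply hs]
  have hIoo : ∀ β : ℝ, 0 ≤ β → P (U ⁻¹' Set.Ioo β 1) = ENNReal.ofReal (1 - β) := by
    intro β hβ
    rw [hPU _ measurableSet_Ioo, Set.Ioo_inter_Ioo]
    simp [max_eq_left hβ, Real.volume_Ioo]
  have hIoi : ∀ β : ℝ, 0 ≤ β → P (U ⁻¹' Set.Ioi β) = ENNReal.ofReal (1 - β) := by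
    intro β hβ
    rw [hPU _ measurableSet_Ioi]
    have : Set.Ioi β ∩ Set.Ioo 0 1 = Set.Ioo β 1 := by
      ext z
      constructor
      · rintro ⟨h1, _, h3⟩; exact ⟨h1, h3⟩
      · rintro ⟨h1, h2⟩; exact ⟨h1, lt_of_le_of_lt hβ h1, h2⟩
    rw [this, Real.volume_Ioo]
  -- distribution of X i
  have hXIoi : ∀ i y, P (X i ⁻¹' Set.Ioi y) = (μ i).toMeasure (Set.Ioi y) := by
    intro i y
    rw [← hXd i, Measure.map_apply (hXm i) measurableSet_Ioi]
  -- the VaR defining set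
  set S : Set ℝ := {a : ℝ | (P {ω | a < f (fun i => X i ω)}).toReal ≤ 1 - α} with hSdef
  -- Step A : f x ∈ S
  have hmem : f x ∈ S := by
    have hN : P (⋃ i, ({ω | qf (μ i).toMeasure γ < X i ω} ∩ {ω | U ω ≤ γ})) = 0 :=
      measure_iUnion_null h0
    have hsub : {ω | f x < f (fun i => X i ω)} ⊆
        (⋃ i, ({ω | qf (μ i).toMeasure γ < X i ω} ∩ {ω | U ω ≤ γ})) ∪ (U ⁻¹' Set.Ioi α) := by
      intro ω hω
      by_cases hUω : U ω ≤ γ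
      · left
        by_contra hnot
        simp only [Set.mem_iUnion, Set.mem_inter_iff, Set.mem_setOf_eq, not_exists, not_and] at hnot
        have hle : ∀ i, X i ω ≤ qf (μ i).toMeasure γ := by
          intro i
          by_contra h
          push_neg at h
          exact hnot i h hUω
        have h1 : f (fun i => X i ω) ≤ f (fun i => qf (μ i).toMeasure γ) := hf hle
        have h2 : f (fun i => qf (μ i).toMeasure γ) ≤ f x :=
          hf (fun i => qf_mono' hγ0 hγα hα1)
        exact absurd hω (not_lt.mpr (h1.trans h2))
      · right
        push_neg at hUω
        have hXeq : (fun i => X i ω) = fun i => qf (μ i).toMeasure (U ω) := by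
          funext i; exact hagree i ω hUω
        by_contra h
        simp only [Set.mem_preimage, Set.mem_Ioi, not_lt] at h
        have : ∀ i, qf (μ i).toMeasure (U ω) ≤ qf (μ i).toMeasure α :=
          fun i => qf_mono' (lt_trans hγ0 hUω) h hα1
        have : f (fun i => X i ω) ≤ f x := by rw [hXeq]; exact hf this
        exact absurd hω (not_lt.mpr this)
    have hle : P {ω | f x < f (fun i => X i ω)} ≤ ENNReal.ofReal (1 - α) := by
      calc P {ω | f x < f (fun i => X i ω)}
          ≤ P ((⋃ i, ({ω | qf (μ i).toMeasure γ < X i ω} ∩ {ω | U ω ≤ γ})) ∪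
              (U ⁻¹' Set.Ioi α)) := measure_mono hsub
        _ ≤ P (⋃ i, ({ω | qf (μ i).toMeasure γ < X i ω} ∩ {ω | U ω ≤ γ})) +
              P (U ⁻¹' Set.Ioi α) := measure_union_le _ _
        _ = ENNReal.ofReal (1 - α) := by rw [hN, hIoi α hα0.le, zero_add]
    have := ENNReal.toReal_mono ENNReal.ofReal_ne_top hle
    simpa [hSdef, ENNReal.toReal_ofReal (by linarith : (0:ℝ) ≤ 1 - α)] using this
  -- Step B : every a < f x has P(f(X) > a) > 1 - α
  have hlow : ∀ a : ℝ, a < f x → 1 - α < (P {ω | a < f (fun i => X i ω)}).toReal := by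
    intro a ha
    -- obtain y strictly below x with a < f y
    obtain ⟨y, hy1, hy2⟩ : ∃ y : Fin n → ℝ, (∀ i, y i < x i) ∧ a < f y := by
      have h1 : Filter.Tendsto (fun k : ℕ => (fun i => x i - 1 / (k + 1)))
          atTop (nhdsWithin x {y | ∀ i, y i < x i}) := by
        apply tendsto_nhdsWithin_of_tendsto_nhds_of_eventually_within
        · rw [tendsto_pi_nhds]
          intro i
          simpa using (tendsto_const_nhds (x := x i)).sub tendsto_one_div_add_atTop_nhds_zero_nat
        · filter_upwards with k
          intro i
          have : (0:ℝ) < 1 / (k + 1) := by positivity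
          show x i - 1 / (k + 1) < x i
          linarith
      have h3 : ∀ᶠ k : ℕ in Filter.atTop, a < f (fun i => x i - 1 / (k + 1)) :=
        ((hlc x).comp h1).eventually (eventually_gt_nhds ha)
      obtain ⟨k, hk⟩ := h3.exists
      refine ⟨fun i => x i - 1 / (k + 1), fun i => ?_, hk⟩
      have : (0:ℝ) < 1 / ((k:ℝ) + 1) := by positivity
      linarith
    rcases eq_or_lt_of_le hγα with hEq | hLt
    · -- case α = γ : use independence on {U ≤ γ}
      subst hEq
      set C : Set Ω := {ω | U ω ≤ γ} with hCdef
      set A : Set Ω := U ⁻¹' Set.Ioo γ 1 with hAdef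
      set B : Set Ω := (⋂ i, X i ⁻¹' Set.Ioi (y i)) ∩ C with hBdef
      have hBmeas : MeasurableSet B :=
        (MeasurableSet.iInter (fun i => hXm i measurableSet_Ioi)).inter
          (hU measurableSet_Iic)
      have hsub : A ∪ B ⊆ {ω | a < f (fun i => X i ω)} := by
        rintro ω (hω | hω)
        · obtain ⟨h1, h2⟩ := hω
          have hXeq : ∀ i, X i ω = qf (μ i).toMeasure (U ω) := fun i => hagree i ω h1
          have hyX : ∀ i, y i ≤ X i ω := by
            intro i
            rw [hXeq i]
            exact le_trans (hy1 i).le (qf_mono' hγ0 h1.le h2)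
          exact lt_of_lt_of_le hy2 (hf hyX)
        · obtain ⟨h1, _⟩ := hω
          simp only [Set.mem_iInter, Set.mem_preimage, Set.mem_Ioi] at h1
          exact lt_of_lt_of_le hy2 (hf (fun i => (h1 i).le))
      have hdisj : Disjoint A B := by
        rw [Set.disjoint_left]
        rintro ω ⟨h1, _⟩ ⟨_, h2⟩
        exact absurd h2 (not_le.mpr h1)
      -- P B > 0 via independence
      set Q : Measure Ω := (ENNReal.ofReal γ)⁻¹ • P.restrict {ω | U ω ≤ γ} with hQdef
      have hQapply : ∀ s : Set Ω, MeasurableSet s →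
          Q s = (ENNReal.ofReal γ)⁻¹ * P (s ∩ C) := by
        intro s hs
        rw [hQdef, Measure.smul_apply, Measure.restrict_apply hs, smul_eq_mul]
      have hfactor : ∀ i, 0 < P ((X i ⁻¹' Set.Ioi (y i)) ∩ C) := by
        intro i
        have hcdf : cdf (μ i).toMeasure (y i) < γ := cdf_lt_of_lt_qf hγ0 (hy1 i)
        have hPXi : P (X i ⁻¹' Set.Ioi (y i)) = (μ i).toMeasure (Set.Ioi (y i)) := hXIoi i _
        have hμIoi : ((μ i).toMeasure (Set.Ioi (y i))).toReal =
            1 - cdf (μ i).toMeasure (y i) := by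
          have hc : (Set.Iic (y i))ᶜ = Set.Ioi (y i) := Set.compl_Iic
          rw [← hc, measure_compl measurableSet_Iic (measure_ne_top _ _),
            measure_univ, ← ProbabilityTheory.ofReal_cdf,
            ENNReal.toReal_sub_of_le (ENNReal.ofReal_le_one.mpr (cdf_le_one _ _))
              ENNReal.one_ne_top]
          simp [ENNReal.toReal_ofReal (cdf_nonneg _ _)]
        have hCc : Cᶜ = U ⁻¹' Set.Ioi γ := by
          ext ω; simp [hCdef, not_le]
        have hPCc : P Cᶜ = ENNReal.ofReal (1 - γ) := by rw [hCc]; exact hIoi γ hγ0.le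
        by_contra h
        push_neg at h
        have h0' : P ((X i ⁻¹' Set.Ioi (y i)) ∩ C) = 0 := le_antisymm h zero_le
        have hsub2 : X i ⁻¹' Set.Ioi (y i) ⊆ ((X i ⁻¹' Set.Ioi (y i)) ∩ C) ∪ Cᶜ := by
          intro ω hω
          by_cases hc : ω ∈ C
          · exact Or.inl ⟨hω, hc⟩
          · exact Or.inr hc
        have hle2 : P (X i ⁻¹' Set.Ioi (y i)) ≤ ENNReal.ofReal (1 - γ) := by
          calc P (X i ⁻¹' Set.Ioi (y i))
              ≤ P (((X i ⁻¹' Set.Ioi (y i)) ∩ C) ∪ Cᶜ) := measure_mono hsub2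
            _ ≤ P ((X i ⁻¹' Set.Ioi (y i)) ∩ C) + P Cᶜ := measure_union_le _ _
            _ = ENNReal.ofReal (1 - γ) := by rw [h0', hPCc, zero_add]
        have hgt : ENNReal.ofReal (1 - γ) < P (X i ⁻¹' Set.Ioi (y i)) := by
          rw [hPXi]
          rw [← ENNReal.toReal_lt_toReal ENNReal.ofReal_ne_top (measure_ne_top _ _)]
          rw [hμIoi, ENNReal.toReal_ofReal (by linarith : (0:ℝ) ≤ 1 - γ)]
          linarith
        exact absurd hle2 (not_le.mpr hgt)
      have hQprod : Q (⋂ i, X i ⁻¹' Set.Ioi (y i)) =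
          ∏ i : Fin n, Q (X i ⁻¹' Set.Ioi (y i)) := by
        have := hindep.measure_inter_preimage_eq_mul Finset.univ
          (sets := fun i => Set.Ioi (y i)) (fun i _ => measurableSet_Ioi)
        simpa using this
      have hγne : ENNReal.ofReal γ ≠ 0 := by
        simp [ENNReal.ofReal_eq_zero, not_le, hγ0]
      have hγinvne : (ENNReal.ofReal γ)⁻¹ ≠ 0 := ENNReal.inv_ne_zero.mpr ENNReal.ofReal_ne_top
      have hQpos : 0 < Q (⋂ i, X i ⁻¹' Set.Ioi (y i)) := by
        rw [hQprod]
        refine CanonicallyOrderedAdd.prod_pos.mpr (fun i _ => ?_)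
        rw [hQapply _ (hXm i measurableSet_Ioi)]
        exact ENNReal.mul_pos hγinvne (hfactor i).ne'
      have hPB : 0 < P B := by
        by_contra h
        push_neg at h
        have h0' : P B = 0 := le_antisymm h zero_le
        have := hQapply (⋂ i, X i ⁻¹' Set.Ioi (y i)) (MeasurableSet.iInter (fun i => hXm i measurableSet_Ioi))
        rw [← hBdef] at this
        rw [this, h0', mul_zero] at hQpos
        exact absurd hQpos (lt_irrefl _)
      have hPA : P A = ENNReal.ofReal (1 - γ) := hIoo γ hγ0.le
      have hge : ENNReal.ofReal (1 - γ) + P B ≤ P {ω | a < f (fun i => X i ω)} := by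
        calc ENNReal.ofReal (1 - γ) + P B = P A + P B := by rw [hPA]
          _ = P (A ∪ B) := (measure_union hdisj hBmeas).symm
          _ ≤ P {ω | a < f (fun i => X i ω)} := measure_mono hsub
      have hfin : P {ω | a < f (fun i => X i ω)} ≠ ⊤ := measure_ne_top _ _
      have h1 : (ENNReal.ofReal (1 - γ) + P B).toReal ≤
          (P {ω | a < f (fun i => X i ω)}).toReal := ENNReal.toReal_mono hfin hge
      rw [ENNReal.toReal_add ENNReal.ofReal_ne_top (measure_ne_top _ _),
        ENNReal.toReal_ofReal (by linarith : (0:ℝ) ≤ 1 - γ)] at h1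
      have hBt : 0 < (P B).toReal := ENNReal.toReal_pos hPB.ne' (measure_ne_top _ _)
      linarith
    · -- case γ < α
      rcases isEmpty_or_nonempty (Fin n) with hn | hn
      · -- trivial : f (X ω) = f y always
        have hXy : ∀ ω, (fun i => X i ω) = y := by
          intro ω; funext i; exact (hn.false i).elim
        have : {ω | a < f (fun i => X i ω)} = Set.univ := by
          ext ω; simp [hXy ω, hy2]
        rw [this]
        simp [measure_univ]
        linarith
      · haveI := hn
        have hcdf : ∀ i, cdf (μ i).toMeasure (y i) < α :=
          fun i => cdf_lt_of_lt_qf hα0 (hy1 i)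
        set β₀ : ℝ := Finset.univ.sup' (Finset.univ_nonempty) (fun i => cdf (μ i).toMeasure (y i)) with hβ₀def
        have hβ₀lt : β₀ < α := by
          rw [hβ₀def, Finset.sup'_lt_iff]
          exact fun i _ => hcdf i
        set β : ℝ := max γ β₀ with hβdef
        have hβlt : β < α := max_lt hLt hβ₀lt
        set t : ℝ := (β + α) / 2 with htdef
        have hβt : β < t := by rw [htdef]; linarith
        have htα : t < α := by rw [htdef]; linarith
        have ht0 : 0 < t := lt_of_lt_of_le hγ0 (le_trans (le_max_left _ _) hβt.le)
        have ht1 : t < 1 := htα.trans hα1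
        have hsub : U ⁻¹' Set.Ioo t 1 ⊆ {ω | a < f (fun i => X i ω)} := by
          rintro ω ⟨h1, h2⟩
          have hγU : γ < U ω := lt_of_le_of_lt (le_trans (le_max_left _ _) hβt.le) h1
          have hXeq : ∀ i, X i ω = qf (μ i).toMeasure (U ω) := fun i => hagree i ω hγU
          have hyX : ∀ i, y i ≤ X i ω := by
            intro i
            rw [hXeq i]
            have hcy : cdf (μ i).toMeasure (y i) < U ω := by
              have : cdf (μ i).toMeasure (y i) ≤ β₀ := by
                rw [hβ₀def]; exact Finset.le_sup' (fun j => (cdf (μ j).toMeasure (y j))) (Finset.mem_univ i)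
              exact lt_of_le_of_lt (this.trans (le_max_right γ β₀)) (hβt.trans h1)
            exact (lt_qf_of_cdf_lt (lt_trans hγ0 hγU) h2 hcy).le
          exact lt_of_lt_of_le hy2 (hf hyX)
        have hge : ENNReal.ofReal (1 - t) ≤ P {ω | a < f (fun i => X i ω)} := by
          rw [← hIoo t ht0.le]
          exact measure_mono hsub
        have h1 : 1 - t ≤ (P {ω | a < f (fun i => X i ω)}).toReal := by
          have := ENNReal.toReal_mono (measure_ne_top _ _) hge
          rwa [ENNReal.toReal_ofReal (by linarith : (0:ℝ) ≤ 1 - t)] at this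
        linarith
  -- combine
  have hlb : ∀ a ∈ S, f x ≤ a := by
    intro a ha
    by_contra h
    push_neg at h
    exact absurd ha (not_le.mpr (hlow a h))
  rw [VaR]
  exact le_antisymm (csInf_le ⟨f x, hlb⟩ hmem) (le_csInf ⟨f x, hmem⟩ hlb)
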